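/- Let Γ = ⟨α_1, …, α_k⟩ ⊂ ℕ^d be an affine semigroup minimally generated by α_1, …, α_k, and let ρ ⊂ ℕ^k × ℕ^k be a minimal presentation of Γ. If Δ(Γ) is nonempty, then min Δ(Γ) = gcd{ ||z| − |w|| : (z,w) ∈ ρ }. -/

import Mathlib

open Finset

/-- The factorization homomorphism `φ_Γ : ℕ^k → ℕ^d` determined by the
generators `α 1, …, α k`. -/
def phi {d k : ℕ} (α : Fin k → Fin d → ℕ) (z : Fin k → ℕ) : Fin d → ℕ :=
  ∑ i, z i • α i

/-- The length `|z|` of a factorization. -/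
def len {k : ℕ} (z : Fin k → ℕ) : ℕ := ∑ i, z i

/-- The length set `L_Γ(γ)`. -/
def lengthSet {d k : ℕ} (α : Fin k → Fin d → ℕ) (γ : Fin d → ℕ) : Set ℕ :=
  len '' {z | phi α z = γ}

/-- The set of successive differences (gaps) of a set of naturals. -/
def deltaOf (L : Set ℕ) : Set ℕ :=
  {δ | 0 < δ ∧ ∃ a, a ∈ L ∧ a + δ ∈ L ∧ ∀ c ∈ L, ¬(a < c ∧ c < a + δ)}

/-- The delta set `Δ(Γ)` of the affine semigroup generated by `α`. -/
def deltaSet {d k : ℕ} (α : Fin k → Fin d → ℕ) : Set ℕ :=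
  ⋃ γ ∈ Set.range (phi α), deltaOf (lengthSet α γ)

/-- The kernel congruence `ker φ_Γ = {(z,w) : φ_Γ(z) = φ_Γ(w)}`. -/
def kerCon {d k : ℕ} (α : Fin k → Fin d → ℕ) : AddCon (Fin k → ℕ) where
  r x y := phi α x = phi α y
  iseqv := ⟨fun _ => rfl, Eq.symm, Eq.trans⟩
  add' := by
    intro a b c e h1 h2
    show phi α (a + c) = phi α (b + e)
    have hadd : ∀ u v : Fin k → ℕ, phi α (u + v) = phi α u + phi α v := by
      intro u v
      simp [phi, add_smul, Finset.sum_add_distrib]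
    rw [hadd, hadd, h1, h2]


lemma phi_add' {d k : ℕ} (α : Fin k → Fin d → ℕ) (u v : Fin k → ℕ) :
    phi α (u + v) = phi α u + phi α v := by
  simp [phi, add_smul, Finset.sum_add_distrib]

lemma len_add' {k : ℕ} (u v : Fin k → ℕ) : len (u + v) = len u + len v := by
  simp [len, Finset.sum_add_distrib]

lemma natAbs_sub_eq_dist (m n : ℕ) : ((m : ℤ) - n).natAbs = Nat.dist m n := by
  rcases le_total m n with h | h
  · rw [Nat.dist_eq_sub_of_le h]; omega
  · rw [Nat.dist_eq_sub_of_le_right h]; omega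

lemma dvd_dist_iff (D m n : ℕ) : D ∣ Nat.dist m n ↔ (D : ℤ) ∣ (m : ℤ) - n := by
  rw [← natAbs_sub_eq_dist, ← Int.natCast_dvd_natCast, Int.dvd_natAbs]

/-- The set of length differences of equal-image factorization pairs, as a
subgroup of `ℤ`. -/
def lenDiffs {d k : ℕ} (α : Fin k → Fin d → ℕ) : AddSubgroup ℤ where
  carrier := {n | ∃ u v : Fin k → ℕ, phi α u = phi α v ∧ (len u : ℤ) - len v = n}
  zero_mem' := ⟨0, 0, rfl, by ring⟩
  add_mem' := by
    rintro a b ⟨u, v, huv, hab⟩ ⟨u', v', huv', hab'⟩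
    exact ⟨u + u', v + v', by rw [phi_add', phi_add', huv, huv'],
      by rw [len_add', len_add']; push_cast; omega⟩
  neg_mem' := by
    rintro a ⟨u, v, huv, hab⟩
    exact ⟨v, u, huv.symm, by omega⟩

lemma mem_lenDiffs_of_natAbs {d k : ℕ} (α : Fin k → Fin d → ℕ) {x : ℤ}
    (hx : x ∈ lenDiffs α) : (x.natAbs : ℤ) ∈ lenDiffs α := by
  rcases Int.natAbs_eq x with h | h
  · rwa [← h]
  · rw [← Int.neg_neg (x.natAbs : ℤ), ← h]; exact neg_mem hx

lemma gcd_mem_lenDiffs {d k : ℕ} (α : Fin k → Fin d → ℕ)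
    (s : Finset ((Fin k → ℕ) × (Fin k → ℕ)))
    (hs : ∀ p ∈ s, ((len p.1 : ℤ) - len p.2) ∈ lenDiffs α) :
    ((s.gcd fun p => Nat.dist (len p.1) (len p.2) : ℕ) : ℤ) ∈ lenDiffs α := by
  classical
  induction s using Finset.induction_on with
  | empty => simpa using (lenDiffs α).zero_mem
  | @insert a s hnotmem ih =>
    rw [Finset.gcd_insert]
    have ha : ((Nat.dist (len a.1) (len a.2) : ℕ) : ℤ) ∈ lenDiffs α := by
      rw [← natAbs_sub_eq_dist]
      exact mem_lenDiffs_of_natAbs α (hs a (Finset.mem_insert_self a s))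
    have hg := ih fun p hp => hs p (Finset.mem_insert_of_mem hp)
    set m : ℕ := Nat.dist (len a.1) (len a.2)
    set n : ℕ := s.gcd fun p => Nat.dist (len p.1) (len p.2)
    have hgcd : gcd m n = Nat.gcd m n := rfl
    rw [hgcd]
    have hb := Nat.gcd_eq_gcd_ab m n
    rw [hb]
    have h1 : (m : ℤ) * Nat.gcdA m n ∈ lenDiffs α := by
      have := zsmul_mem ha (Nat.gcdA m n); rwa [zsmul_eq_mul, mul_comm] at this
    have h2 : (n : ℤ) * Nat.gcdB m n ∈ lenDiffs α := by
      have := zsmul_mem hg (Nat.gcdB m n); rwa [zsmul_eq_mul, mul_comm] at this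
    exact add_mem h1 h2

/-- If the congruence generated by `ρ` is the kernel congruence, then the gcd of
the length differences over `ρ` divides every length difference of a pair of
factorizations of a common element. -/
lemma gcd_dvd_lenDiff {d k : ℕ} (α : Fin k → Fin d → ℕ)
    (ρ : Finset ((Fin k → ℕ) × (Fin k → ℕ)))
    (hρgen : addConGen (fun x y => (x, y) ∈ ρ) = kerCon α)
    {z w : Fin k → ℕ} (h : phi α z = phi α w) :
    ((ρ.gcd fun p => Nat.dist (len p.1) (len p.2) : ℕ) : ℤ) ∣ (len z : ℤ) - len w := by
  set D : ℕ := ρ.gcd fun p => Nat.dist (len p.1) (len p.2) with hD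
  let c : AddCon (Fin k → ℕ) :=
    { r := fun x y => (D : ℤ) ∣ (len x : ℤ) - len y
      iseqv := by
        constructor
        · intro x; simp
        · intro x y hxy
          have : (len y : ℤ) - len x = -((len x : ℤ) - len y) := by ring
          rw [this]; exact dvd_neg.mpr hxy
        · intro x y z h1 h2
          have : (len x : ℤ) - len z = ((len x : ℤ) - len y) + ((len y : ℤ) - len z) := by
            ring
          rw [this]; exact dvd_add h1 h2
      add' := by
        intro a b p q h1 h2
        show (D : ℤ) ∣ (len (a + p) : ℤ) - len (b + q)
        rw [len_add', len_add']
        have : ((len a + len p : ℕ) : ℤ) - ((len b + len q : ℕ) : ℤ) =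
            ((len a : ℤ) - len b) + ((len p : ℤ) - len q) := by push_cast; ring
        rw [this]; exact dvd_add h1 h2 }
  have hle : addConGen (fun x y => (x, y) ∈ ρ) ≤ c := by
    apply AddCon.addConGen_le.mpr
    intro x y hxy
    show (D : ℤ) ∣ (len x : ℤ) - len y
    rw [← dvd_dist_iff]
    exact Finset.gcd_dvd hxy
  have : kerCon α ≤ c := hρgen ▸ hle
  exact this h

/-- If `Γ = ⟨α_1,…,α_k⟩ ⊂ ℕ^d` is minimally generated by `α_1,…,α_k`, `ρ` is a
minimal presentation of `Γ`, and `Δ(Γ) ≠ ∅`, then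
`min Δ(Γ) = gcd{ ||z|−|w|| : (z,w) ∈ ρ }`. -/
theorem stmt0 {d k : ℕ} (α : Fin k → Fin d → ℕ)
    (hne : ∀ i, α i ≠ 0)
    (hmin : ∀ i, α i ∉ AddSubmonoid.closure (α '' {j | j ≠ i}))
    (ρ : Finset ((Fin k → ℕ) × (Fin k → ℕ)))
    (hρgen : addConGen (fun x y => (x, y) ∈ ρ) = kerCon α)
    (hρmin : ∀ ρ' ⊆ ρ, addConGen (fun x y => (x, y) ∈ ρ') = kerCon α → ρ' = ρ)
    (hΔ : (deltaSet α).Nonempty) :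
    sInf (deltaSet α) = ρ.gcd fun p => Nat.dist (len p.1) (len p.2) := by
  classical
  set D : ℕ := ρ.gcd fun p => Nat.dist (len p.1) (len p.2) with hD
  -- Every relation in ρ is in the kernel congruence.
  have hρker : ∀ p ∈ ρ, phi α p.1 = phi α p.2 := by
    intro p hp
    have : addConGen (fun x y => (x, y) ∈ ρ) p.1 p.2 := AddConGen.Rel.of _ _ hp
    rw [hρgen] at this
    exact this
  -- every element of the delta set is divisible by D
  have hdvd : ∀ δ ∈ deltaSet α, D ∣ δ := by
    intro δ hδ
    rcases Set.mem_iUnion₂.mp hδ with ⟨γ, hγ, hpos, a, ⟨z, hz, hza⟩, ⟨u, hu, hua⟩, _⟩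
    have := gcd_dvd_lenDiff α ρ hρgen (hu.trans hz.symm)
    rw [hua, hza] at this
    rw [← hD] at this
    have h2 : (D : ℤ) ∣ (δ : ℤ) := by
      have : ((a + δ : ℕ) : ℤ) - (a : ℤ) = (δ : ℤ) := by push_cast; ring
      rw [← this]
      exact ‹(D:ℤ) ∣ ((a + δ : ℕ) : ℤ) - (a : ℤ)›
    exact_mod_cast h2
  -- D is positive
  obtain ⟨δ₀, hδ₀⟩ := hΔ
  have hδ₀pos : 0 < δ₀ := by
    rcases Set.mem_iUnion₂.mp hδ₀ with ⟨γ, hγ, hpos, _⟩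
    exact hpos
  have hDpos : 0 < D := by
    rcases Nat.eq_zero_or_pos D with h0 | h
    · exfalso
      have := hdvd δ₀ hδ₀
      rw [h0] at this
      omega
    · exact h
  -- D is attained as a length difference: D ∈ lenDiffs
  have hmem : ((D : ℕ) : ℤ) ∈ lenDiffs α := by
    apply gcd_mem_lenDiffs
    intro p hp
    exact ⟨p.1, p.2, hρker p hp, rfl⟩
  obtain ⟨u, v, huv, hlen⟩ := hmem
  -- hence len u = len v + D
  have hlen' : len u = len v + D := by omega
  -- D is in the delta set
  have hDmem : D ∈ deltaSet α := by
    apply Set.mem_iUnion₂.mpr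
    refine ⟨phi α u, ⟨u, rfl⟩, hDpos, len v, ⟨v, huv.symm, rfl⟩,
      ⟨u, rfl, by omega⟩, ?_⟩
    rintro c ⟨z, hz, rfl⟩ ⟨h1, h2⟩
    have := gcd_dvd_lenDiff α ρ hρgen (hz.trans huv)
    rw [← hD] at this
    have h3 : (D : ℤ) ∣ (len z : ℤ) - len v := this
    rcases h3 with ⟨e, he⟩
    have : (0 : ℤ) < (len z : ℤ) - len v := by omega
    have h4 : (len z : ℤ) - len v < D := by omega
    have : (0:ℤ) < (D:ℤ) * e := by omega
    have he1 : (1:ℤ) ≤ e := by nlinarith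
    nlinarith
  refine le_antisymm (Nat.sInf_le hDmem) ?_
  have h5 := Nat.sInf_mem ⟨δ₀, hδ₀⟩
  have h6 := hdvd _ h5
  have h7 : 0 < sInf (deltaSet α) := by
    rcases Set.mem_iUnion₂.mp h5 with ⟨γ, hγ, hpos, _⟩
    exact hpos
  exact Nat.le_of_dvd h7 h6
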